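/- (Second Picard–Fuchs relation.) For every h > 0 one has I_2(h) = (4/15)·h·I'_0(h) + ((4/5)·h + 4/15)·I'_2(h). -/

import Mathlib

open Real Set Filter intervalIntegral

/-- Right endpoint of the exterior oval: `x_max(h) = √(1 + √(1+4h))`. -/
noncomputable def xmax (h : ℝ) : ℝ := Real.sqrt (1 + Real.sqrt (1 + 4*h))

/-- Complete elliptic integral `I_i(h) = ∫_{-x_max}^{x_max} x^i √(2h + x² - x⁴/2) dx`. -/
noncomputable def ellI (i : ℕ) (h : ℝ) : ℝ :=
  ∫ x in (-xmax h)..(xmax h), x^i * Real.sqrt (2*h + x^2 - x^4/2)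

/-- Complete elliptic integral `I'_i(h) = ∫_{-x_max}^{x_max} x^i (2h + x² - x⁴/2)^{-1/2} dx`. -/
noncomputable def ellI' (i : ℕ) (h : ℝ) : ℝ :=
  ∫ x in (-xmax h)..(xmax h), x^i / Real.sqrt (2*h + x^2 - x^4/2)

section Aux

variable {h : ℝ}

lemma pf_sq_s (hh : 0 < h) : (Real.sqrt (1 + 4*h))^2 = 1 + 4*h :=
  Real.sq_sqrt (by linarith)

lemma pf_one_lt_s (hh : 0 < h) : 1 < Real.sqrt (1 + 4*h) := by
  nlinarith [pf_sq_s hh, Real.sqrt_nonneg (1 + 4*h)]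

lemma pf_sq_a (hh : 0 < h) : (xmax h)^2 = 1 + Real.sqrt (1 + 4*h) := by
  have h1 : (0:ℝ) ≤ 1 + Real.sqrt (1 + 4*h) := by positivity
  exact Real.sq_sqrt h1

lemma pf_a_pos (hh : 0 < h) : 0 < xmax h := by
  apply Real.sqrt_pos.2
  have := Real.sqrt_nonneg (1 + 4*h)
  linarith

/-- Factorization of Q. -/
lemma pf_fact (hh : 0 < h) (x : ℝ) :
    2*h + x^2 - x^4/2
      = ((xmax h)^2 - x^2) * (x^2 + (Real.sqrt (1 + 4*h) - 1)) / 2 := by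
  have hs := pf_sq_s hh
  have ha := pf_sq_a hh
  linear_combination (-(x^2 + Real.sqrt (1 + 4*h) - 1)/2) * ha - (1/2) * hs

lemma pf_Q_pos (hh : 0 < h) {x : ℝ} (hx : x ∈ Ioo (-(xmax h)) (xmax h)) :
    0 < 2*h + x^2 - x^4/2 := by
  rw [pf_fact hh]
  have h1 : x^2 < (xmax h)^2 := sq_lt_sq' hx.1 hx.2
  have h2 := pf_one_lt_s hh
  have h3 : (0:ℝ) ≤ x^2 := sq_nonneg x
  nlinarith

lemma pf_Q_xmax (hh : 0 < h) : 2*h + (xmax h)^2 - (xmax h)^4/2 = 0 := by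
  rw [pf_fact hh]; ring

/-- Integrability of `x^i / √((a²-x²)(x²+c)/2)` on `[0, a]`. -/
lemma pf_int_aux (i : ℕ) (a c : ℝ) (ha0 : 0 < a) (hc0 : 0 < c) :
    IntervalIntegrable (fun x => x^i / Real.sqrt ((a^2 - x^2) * (x^2 + c) / 2))
      MeasureTheory.volume 0 a := by
  have hK0 : 0 < Real.sqrt (a * c / 2) := Real.sqrt_pos.2 (by positivity)
  have hg : IntervalIntegrable
      (fun x => (a^i / Real.sqrt (a * c / 2)) * (a - x) ^ (-(1/2) : ℝ))
      MeasureTheory.volume 0 a := by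
    have h1 : IntervalIntegrable (fun x : ℝ => x ^ (-(1/2) : ℝ))
        MeasureTheory.volume 0 a := intervalIntegrable_rpow' (by norm_num)
    have h2 := h1.comp_sub_left a
    simp only [sub_zero, sub_self] at h2
    exact h2.symm.const_mul _
  apply hg.mono_fun
  · apply Measurable.aestronglyMeasurable
    exact (measurable_id.pow_const i).div
      (Real.continuous_sqrt.measurable.comp (by fun_prop))
  · apply Filter.eventually_of_mem (MeasureTheory.self_mem_ae_restrict measurableSet_uIoc)
    intro x hx
    rw [Set.uIoc_of_le ha0.le] at hx
    have hx0 : 0 < x := hx.1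
    have hxa : x ≤ a := hx.2
    have hQlb : (a * c / 2) * (a - x) ≤ (a^2 - x^2) * (x^2 + c) / 2 := by
      have hkey : 0 ≤ (a - x) * (a*x^2 + x^3 + c*x) := by
        apply mul_nonneg (by linarith)
        have h1 : 0 < a*x^2 := by positivity
        have h2 : 0 < x^3 := by positivity
        have h3 : 0 < c*x := by positivity
        linarith
      nlinarith [hkey]
    have hQnn0 : 0 ≤ (a * c / 2) * (a - x) := by
      apply mul_nonneg (by positivity); linarith
    have hQnn : 0 ≤ (a^2 - x^2) * (x^2 + c) / 2 := le_trans hQnn0 hQlb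
    have hsqrt_lb : Real.sqrt (a * c / 2) * Real.sqrt (a - x)
        ≤ Real.sqrt ((a^2 - x^2) * (x^2 + c) / 2) := by
      rw [← Real.sqrt_mul (by positivity)]
      exact Real.sqrt_le_sqrt hQlb
    have hrpow : (a - x) ^ (-(1/2) : ℝ) = (Real.sqrt (a - x))⁻¹ := by
      rw [Real.rpow_neg (by linarith), Real.sqrt_eq_rpow]
    have hLnn : 0 ≤ x^i / Real.sqrt ((a^2 - x^2) * (x^2 + c) / 2) := by positivity
    simp only [Real.norm_of_nonneg hLnn, Real.norm_eq_abs]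
    refine le_trans ?_ (le_abs_self _)
    rw [hrpow]
    rcases eq_or_lt_of_le hxa with heq | hlt
    · rw [show (a^2 - x^2) * (x^2 + c) / 2 = 0 by rw [heq]; ring]
      rw [← heq]
      simp
    · have hsx : 0 < Real.sqrt (a - x) := Real.sqrt_pos.2 (by linarith)
      rw [show a^i / Real.sqrt (a * c / 2) * (Real.sqrt (a - x))⁻¹
        = a^i / (Real.sqrt (a * c / 2) * Real.sqrt (a - x)) by ring]
      exact div_le_div₀ (by positivity) (pow_le_pow_left₀ hx0.le hxa i)
        (by positivity) hsqrt_lb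

/-- Integrability of `x^i / √Q` on the right half `[0, a]`. -/
lemma pf_integrable_right (hh : 0 < h) (i : ℕ) :
    IntervalIntegrable (fun x => x^i / Real.sqrt (2*h + x^2 - x^4/2))
      MeasureTheory.volume 0 (xmax h) := by
  have heq : (fun x : ℝ => x^i / Real.sqrt (2*h + x^2 - x^4/2))
      = fun x : ℝ => x^i / Real.sqrt
          (((xmax h)^2 - x^2) * (x^2 + (Real.sqrt (1 + 4*h) - 1)) / 2) := by
    funext x
    rw [pf_fact hh x]
  rw [heq]
  exact pf_int_aux i (xmax h) _ (pf_a_pos hh)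
    (by have := pf_one_lt_s hh; linarith)

/-- Integrability of `x^i / √Q` on `[-a, a]` for even `i`. -/
lemma pf_integrable (hh : 0 < h) (i : ℕ) (hi : Even i) :
    IntervalIntegrable (fun x => x^i / Real.sqrt (2*h + x^2 - x^4/2))
      MeasureTheory.volume (-(xmax h)) (xmax h) := by
  have hr := pf_integrable_right hh i
  have hl : IntervalIntegrable (fun x => x^i / Real.sqrt (2*h + x^2 - x^4/2))
      MeasureTheory.volume (-(xmax h)) 0 := by
    have h2 := (IntervalIntegrable.iff_comp_neg (f := fun x => x^i / Real.sqrt (2*h + x^2 - x^4/2))).mp hr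
    simp only [neg_zero] at h2
    have heq : (fun x : ℝ => (-x)^i / Real.sqrt (2*h + (-x)^2 - (-x)^4/2))
        = (fun x : ℝ => x^i / Real.sqrt (2*h + x^2 - x^4/2)) := by
      funext x
      rw [hi.neg_pow, show (-x)^2 = x^2 by ring, show (-x)^4 = x^4 by ring]
    rw [heq] at h2
    exact h2.symm
  exact hl.trans hr

/-- The key derivative computation. -/
lemma pf_deriv (hh : 0 < h) {x : ℝ} (hx : x ∈ Ioo (-(xmax h)) (xmax h)) :
    HasDerivAt (fun y => (y^3/5 - 2*y/15) * Real.sqrt (2*h + y^2 - y^4/2))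
      (x^2 * Real.sqrt (2*h + x^2 - x^4/2)
        - (4/15) * h * (x^0 / Real.sqrt (2*h + x^2 - x^4/2))
        - ((4/5) * h + 4/15) * (x^2 / Real.sqrt (2*h + x^2 - x^4/2))) x := by
  have hQx : 0 < 2*h + x^2 - x^4/2 := pf_Q_pos hh hx
  have hs0 : Real.sqrt (2*h + x^2 - x^4/2) ≠ 0 := (Real.sqrt_pos.2 hQx).ne'
  have hs0' : (0:ℝ) < Real.sqrt (2*h + x^2 - x^4/2) := Real.sqrt_pos.2 hQx
  have hkey : Real.sqrt (2*h + x^2 - x^4/2) * Real.sqrt (2*h + x^2 - x^4/2)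
      = 2*h + x^2 - x^4/2 := Real.mul_self_sqrt hQx.le
  have hQ' : HasDerivAt (fun y : ℝ => 2*h + y^2 - y^4/2) (2*x - 2*x^3) x := by
    have h1 := ((hasDerivAt_pow 2 x).const_add (2*h)).sub ((hasDerivAt_pow 4 x).div_const 2)
    refine h1.congr_deriv ?_
    push_cast; ring
  have hsq : HasDerivAt (fun y => Real.sqrt (2*h + y^2 - y^4/2))
      ((2*x - 2*x^3) / (2 * Real.sqrt (2*h + x^2 - x^4/2))) x := hQ'.sqrt hQx.ne'
  have hpoly : HasDerivAt (fun y : ℝ => y^3/5 - 2*y/15) (3*x^2/5 - 2/15) x := by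
    have h1 := ((hasDerivAt_pow 3 x).div_const 5).sub
      ((hasDerivAt_id' (𝕜 := ℝ) x).const_mul 2 |>.div_const 15)
    refine h1.congr_deriv ?_
    push_cast; ring
  have hF' := hpoly.mul hsq
  refine hF'.congr_deriv ?_
  rw [eq_comm]
  simp only [pow_zero]
  set t := Real.sqrt (2*h + x^2 - x^4/2) with ht
  field_simp
  linear_combination (30*x^2 + 10) * hkey

/-- F vanishes at the endpoints. -/
lemma pf_F_endpoints (hh : 0 < h) :
    ((xmax h)^3/5 - 2*(xmax h)/15) * Real.sqrt (2*h + (xmax h)^2 - (xmax h)^4/2) = 0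
    ∧ ((-(xmax h))^3/5 - 2*(-(xmax h))/15)
        * Real.sqrt (2*h + (-(xmax h))^2 - (-(xmax h))^4/2) = 0 := by
  constructor
  · rw [pf_Q_xmax hh, Real.sqrt_zero, mul_zero]
  · rw [show 2*h + (-(xmax h))^2 - (-(xmax h))^4/2 = 2*h + (xmax h)^2 - (xmax h)^4/2 by ring,
      pf_Q_xmax hh, Real.sqrt_zero, mul_zero]

end Aux

/-- Second Picard-Fuchs relation. -/
theorem picard_fuchs_two (h : ℝ) (hh : 0 < h) :
    ellI 2 h = (4/15) * h * ellI' 0 h + ((4/5) * h + 4/15) * ellI' 2 h := by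
  have ha0 : 0 < xmax h := pf_a_pos hh
  have hI0 : IntervalIntegrable (fun x => x^0 / Real.sqrt (2*h + x^2 - x^4/2))
      MeasureTheory.volume (-(xmax h)) (xmax h) := pf_integrable hh 0 Even.zero
  have hI2 : IntervalIntegrable (fun x => x^2 / Real.sqrt (2*h + x^2 - x^4/2))
      MeasureTheory.volume (-(xmax h)) (xmax h) := pf_integrable hh 2 even_two
  have hIc : IntervalIntegrable (fun x => x^2 * Real.sqrt (2*h + x^2 - x^4/2))
      MeasureTheory.volume (-(xmax h)) (xmax h) := by
    apply Continuous.intervalIntegrable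
    exact (continuous_pow 2).mul (Real.continuous_sqrt.comp (by fun_prop))
  have hGint : IntervalIntegrable (fun x =>
      x^2 * Real.sqrt (2*h + x^2 - x^4/2)
        - (4/15) * h * (x^0 / Real.sqrt (2*h + x^2 - x^4/2))
        - ((4/5) * h + 4/15) * (x^2 / Real.sqrt (2*h + x^2 - x^4/2)))
      MeasureTheory.volume (-(xmax h)) (xmax h) :=
    (hIc.sub (hI0.const_mul _)).sub (hI2.const_mul _)
  have hFTC : (∫ x in (-(xmax h))..(xmax h),
      (x^2 * Real.sqrt (2*h + x^2 - x^4/2)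
        - (4/15) * h * (x^0 / Real.sqrt (2*h + x^2 - x^4/2))
        - ((4/5) * h + 4/15) * (x^2 / Real.sqrt (2*h + x^2 - x^4/2)))) = 0 := by
    rw [intervalIntegral.integral_eq_sub_of_hasDeriv_right_of_le (by linarith)
      (f := fun y => (y^3/5 - 2*y/15) * Real.sqrt (2*h + y^2 - y^4/2))
      ?_ (fun x hx => (pf_deriv hh hx).hasDerivWithinAt) hGint]
    · rw [(pf_F_endpoints hh).1, (pf_F_endpoints hh).2, sub_zero]
    · apply Continuous.continuousOn
      exact (by fun_prop : Continuous fun y : ℝ => y^3/5 - 2*y/15).mul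
        (Real.continuous_sqrt.comp (by fun_prop))
  rw [intervalIntegral.integral_sub (hIc.sub (hI0.const_mul _)) (hI2.const_mul _),
      intervalIntegral.integral_sub hIc (hI0.const_mul _),
      intervalIntegral.integral_const_mul, intervalIntegral.integral_const_mul] at hFTC
  have e2 : ellI 2 h = ∫ x in (-(xmax h))..(xmax h),
      x^2 * Real.sqrt (2*h + x^2 - x^4/2) := rfl
  have e0' : ellI' 0 h = ∫ x in (-(xmax h))..(xmax h),
      x^0 / Real.sqrt (2*h + x^2 - x^4/2) := rfl
  have e2' : ellI' 2 h = ∫ x in (-(xmax h))..(xmax h),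
      x^2 / Real.sqrt (2*h + x^2 - x^4/2) := rfl
  rw [← e2, ← e0', ← e2'] at hFTC
  linarith
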